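/- (Proposition 1.) The per-frame AoI chain is ergodic with steady-state distribution π: for every initial state n₀ ∈ ℕ and every w ∈ ℕ, the j-step transition probability Q j n₀ w converges to π w as j → ∞. -/

import Mathlib

/-- Proposition 1: the per-frame AoI chain is ergodic with steady-state
distribution `π`. -/
theorem stmt_6 (M : ℕ) (hM : 1 ≤ M) (μ ξ : ℝ)
    (hμ : μ ∈ Set.Ioo (0 : ℝ) 1) (hξ : ξ ∈ Set.Ioo (0 : ℝ) 1)
    (σ : ℝ) (hσ : σ = 1 - (1 - μ) ^ M)
    (q : ℕ → ℕ → ℝ)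
    (hq : ∀ n₁ n₂, q n₁ n₂ =
      if n₂ ≤ M - 1 then ξ * μ * (1 - μ) ^ n₂ / σ
      else if n₂ = n₁ + M then 1 - ξ else 0)
    (Q : ℕ → ℕ → ℕ → ℝ)
    (hQ0 : ∀ a c, Q 0 a c = if a = c then 1 else 0)
    (hQs : ∀ j a c, Q (j + 1) a c = ∑' b : ℕ, Q j a b * q b c)
    (π : ℕ → ℝ)
    (hπ : ∀ w, π w = ξ * (1 - ξ) ^ (w / M) * μ * (1 - μ) ^ (w % M) / σ) :
    ∀ n₀ w : ℕ,
      Filter.Tendsto (fun j => Q j n₀ w) Filter.atTop (nhds (π w)) := by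
  obtain ⟨hμ0, hμ1⟩ := hμ
  obtain ⟨hξ0, hξ1⟩ := hξ
  have hM0 : 0 < M := hM
  have hσpos : 0 < σ := by
    rw [hσ]
    have : (1 - μ) ^ M < 1 := pow_lt_one₀ (by linarith) (by linarith) hM0.ne'
    linarith
  have hσ0 : σ ≠ 0 := ne_of_gt hσpos
  have hμ0' : μ ≠ 0 := ne_of_gt hμ0
  -- geometric sum identity
  have hgeom : ∑ r ∈ Finset.range M, μ * (1 - μ) ^ r = σ := by
    rw [← Finset.mul_sum, geom_sum_eq (by intro h; apply hμ0'; linarith) M, hσ]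
    field_simp
    rw [div_eq_iff (by intro h; apply hμ0'; linarith)]
    ring
  -- partial sums of π over full frames
  have hSpi : ∀ j, ∑ b ∈ Finset.range (j * M), π b = 1 - (1 - ξ) ^ j := by
    intro j
    induction j with
    | zero => simp
    | succ j ih =>
      have hjm : (j + 1) * M = j * M + M := by ring
      rw [hjm, Finset.sum_range_add, ih]
      have hterm : ∀ i ∈ Finset.range M,
          π (j * M + i) = ξ * (1 - ξ) ^ j * (μ * (1 - μ) ^ i) / σ := by
        intro i hi
        rw [Finset.mem_range] at hi
        rw [hπ, show j * M + i = M * j + i by ring, Nat.mul_add_div hM0,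
          Nat.mul_add_mod, Nat.div_eq_of_lt hi, Nat.mod_eq_of_lt hi, add_zero]
        ring
      rw [Finset.sum_congr rfl hterm]
      have : ∑ i ∈ Finset.range M, ξ * (1 - ξ) ^ j * (μ * (1 - μ) ^ i) / σ
          = ξ * (1 - ξ) ^ j * (∑ i ∈ Finset.range M, μ * (1 - μ) ^ i) / σ := by
        rw [Finset.mul_sum, Finset.sum_div]
      rw [this, hgeom]
      field_simp
      ring
  -- explicit formula for the j-step transition probabilities
  have key : ∀ j a c, Q j a c =
      (if c = a + j * M then (1 - ξ) ^ j else 0) +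
      (if c < j * M then π c else 0) := by
    intro j
    induction j with
    | zero =>
      intro a c
      rw [hQ0]
      simp only [Nat.zero_mul, Nat.add_zero, pow_zero, Nat.not_lt_zero,
        if_false, add_zero]
      by_cases h : a = c
      · simp [h]
      · rw [if_neg h, if_neg fun hc => h hc.symm]
    | succ j ih =>
      intro a c
      rw [hQs]
      have hsupp : ∀ b ∉ Finset.range (a + j * M + 1), Q j a b * q b c = 0 := by
        intro b hb
        rw [Finset.mem_range, not_lt] at hb
        rw [ih]
        have h1 : b ≠ a + j * M := by omega
        have h2 : ¬ b < j * M := by omega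
        simp [h1, h2]
      rw [tsum_eq_sum hsupp]
      have hsplit : ∀ b ∈ Finset.range (a + j * M + 1), Q j a b * q b c =
          (if b = a + j * M then (1 - ξ) ^ j * q b c else 0) +
          (if b < j * M then π b * q b c else 0) := by
        intro b _
        rw [ih]
        split_ifs with h1 h2 h2
        · omega
        · ring
        · ring
        · ring
      rw [Finset.sum_congr rfl hsplit, Finset.sum_add_distrib]
      have hfirst : ∑ b ∈ Finset.range (a + j * M + 1),
          (if b = a + j * M then (1 - ξ) ^ j * q b c else 0)
          = (1 - ξ) ^ j * q (a + j * M) c := by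
        rw [Finset.sum_ite_eq', if_pos (by rw [Finset.mem_range]; omega)]
      have hsecond : ∑ b ∈ Finset.range (a + j * M + 1),
          (if b < j * M then π b * q b c else 0)
          = ∑ b ∈ Finset.range (j * M), π b * q b c := by
        simp only [← Finset.mem_range]
        rw [Finset.sum_ite_mem, Finset.inter_eq_right.mpr
          (Finset.range_subset_range.mpr (by omega))]
      rw [hfirst, hsecond]
      by_cases hc : c < M
      · -- reset case: q b c is constant in b
        have hqb : ∀ b, q b c = ξ * μ * (1 - μ) ^ c / σ := by
          intro b
          rw [hq, if_pos (by omega)]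
        have hjM : M ≤ (j + 1) * M := Nat.le_mul_of_pos_left M (Nat.succ_pos j)
        rw [if_neg (by omega), if_pos (by omega)]
        have : ∑ b ∈ Finset.range (j * M), π b * q b c
            = (∑ b ∈ Finset.range (j * M), π b) * (ξ * μ * (1 - μ) ^ c / σ) := by
          rw [Finset.sum_mul]
          exact Finset.sum_congr rfl fun b _ => by rw [hqb]
        rw [this, hSpi, hqb, hπ, Nat.div_eq_of_lt hc, Nat.mod_eq_of_lt hc]
        ring
      · -- shift case: q b c hits only b = c - M
        push_neg at hc
        obtain ⟨d, rfl⟩ : ∃ d, c = M + d := ⟨c - M, by omega⟩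
        have hqb : ∀ b, q b (M + d) = if b = d then 1 - ξ else 0 := by
          intro b
          rw [hq, if_neg (by omega)]
          simp only [show (M + d = b + M) ↔ b = d from by omega]
        have hπd : π (M + d) = π d * (1 - ξ) := by
          rw [hπ, hπ, show M + d = d + M by ring, Nat.add_div_right d hM0,
            Nat.add_mod_right, pow_succ]
          ring
        have hsum2 : ∑ b ∈ Finset.range (j * M), π b * q b (M + d)
            = if d < j * M then π d * (1 - ξ) else 0 := by
          have : ∀ b ∈ Finset.range (j * M), π b * q b (M + d)
              = if b = d then π b * (1 - ξ) else 0 := by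
            intro b _
            rw [hqb]
            split_ifs <;> ring
          rw [Finset.sum_congr rfl this, Finset.sum_ite_eq']
          simp [Finset.mem_range]
        rw [hsum2, hqb]
        have hjm : (j + 1) * M = j * M + M := by ring
        simp only [show ((M + d = a + (j + 1) * M) ↔ (a + j * M = d)) from by
            rw [hjm]; omega,
          show ((M + d < (j + 1) * M) ↔ (d < j * M)) from by rw [hjm]; omega,
          hπd]
        split_ifs with h1 h2 h2 <;> first
          | (rw [pow_succ]; ring)
          | ring
  -- conclude: the sequence is eventually constant equal to π w
  intro n₀ w
  have hev : ∀ j ≥ w + 1, Q j n₀ w = π w := by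
    intro j hj
    have h1 : j ≤ j * M := Nat.le_mul_of_pos_right j hM0
    rw [key, if_neg (by omega), if_pos (by omega), zero_add]
  apply Filter.Tendsto.congr' _ tendsto_const_nhds
  filter_upwards [Filter.eventually_ge_atTop (w + 1)] with j hj
  exact (hev j hj).symm
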